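/- There is a constant C_k depending only on k such that for any ε ∈ (0,1/2) and any symmetric k×k matrix A with ‖A − Id_k‖ < ε (operator norm), the lower triangular matrix T with T A Tᵀ = Id_k satisfies ‖T − Id_k‖ < C_k ε. -/

import Mathlib

open Matrix

/-- Operator norm of a real k×k matrix induced by the Euclidean norm. -/
noncomputable def opNorm {k : ℕ} (A : Matrix (Fin k) (Fin k) ℝ) : ℝ :=
  ‖Matrix.toEuclideanCLM (𝕜 := ℝ) (n := Fin k) A‖

namespace CholeskyAux

open scoped Matrix.Norms.L2Operator

lemma opNorm_eq {k : ℕ} (A : Matrix (Fin k) (Fin k) ℝ) : opNorm A = ‖A‖ := rfl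

lemma coord_le {k : ℕ} (y : EuclideanSpace ℝ (Fin k)) (i : Fin k) : |y i| ≤ ‖y‖ := by
  rw [EuclideanSpace.norm_eq]
  have h1 : |y i|^2 ≤ ∑ l, ‖y l‖^2 := by
    simpa [Real.norm_eq_abs] using
      Finset.single_le_sum (f := fun l => ‖y l‖^2) (fun l _ => sq_nonneg _) (Finset.mem_univ i)
  calc |y i| = Real.sqrt (|y i|^2) := by rw [Real.sqrt_sq (abs_nonneg _)]
  _ ≤ _ := Real.sqrt_le_sqrt h1

lemma entry_le {k : ℕ} (A : Matrix (Fin k) (Fin k) ℝ) (i j : Fin k) : |A i j| ≤ ‖A‖ := by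
  have h := A.l2_opNorm_mulVec ((WithLp.equiv 2 (Fin k → ℝ)).symm (Pi.single j 1))
  rw [WithLp.equiv_symm_apply, PiLp.norm_toLp_single] at h
  simp only [norm_one, mul_one] at h
  refine le_trans ?_ h
  refine le_trans ?_ (coord_le _ i)
  apply le_of_eq
  congr 1
  show A i j = (A *ᵥ EuclideanSpace.single j (1:ℝ)) i
  simp [Matrix.mulVec, dotProduct, EuclideanSpace.single_apply]

lemma transpose_norm {k : ℕ} (T : Matrix (Fin k) (Fin k) ℝ) : ‖Tᵀ‖ = ‖T‖ := by
  have := T.l2_opNorm_conjTranspose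
  rwa [Matrix.conjTranspose_eq_transpose_of_trivial] at this

lemma mul_transpose_norm {k : ℕ} (T : Matrix (Fin k) (Fin k) ℝ) : ‖T * Tᵀ‖ = ‖T‖ * ‖T‖ := by
  have h := Tᵀ.l2_opNorm_conjTranspose_mul_self
  rw [Matrix.conjTranspose_eq_transpose_of_trivial, Matrix.transpose_transpose,
    transpose_norm] at h
  exact h

lemma norm_one_le' {k : ℕ} : ‖(1 : Matrix (Fin k) (Fin k) ℝ)‖ ≤ 1 := by
  rw [Matrix.cstar_norm_def, _root_.map_one]
  exact ContinuousLinearMap.norm_id_le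

lemma std_norm_le {k : ℕ} (i j : Fin k) (c : ℝ) : ‖Matrix.single i j c‖ ≤ |c| := by
  rw [Matrix.l2_opNorm_def]
  refine ContinuousLinearMap.opNorm_le_bound _ (abs_nonneg c) fun x => ?_
  rw [LinearEquiv.trans_apply]
  have hx : (LinearMap.toContinuousLinearMap ((Matrix.toEuclideanLin (𝕜 := ℝ)
      (Matrix.single i j c)))) x
      = (WithLp.equiv 2 (Fin k → ℝ)).symm (Pi.single i (c * x j)) := by
    apply (WithLp.equiv 2 (Fin k → ℝ)).injective
    ext l
    simp [Matrix.toEuclideanLin, Matrix.mulVec, dotProduct, Matrix.single,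
      Pi.single_apply, WithLp.equiv_symm_apply]
    rcases eq_or_ne l i with h|h
    · subst h; simp
    · simp [h, Ne.symm h]
  rw [hx, WithLp.equiv_symm_apply, PiLp.norm_toLp_single]
  rw [Real.norm_eq_abs, abs_mul]
  exact mul_le_mul_of_nonneg_left (coord_le x j) (abs_nonneg c)

lemma norm_le_sum_abs {k : ℕ} (M : Matrix (Fin k) (Fin k) ℝ) :
    ‖M‖ ≤ ∑ i : Fin k, ∑ j : Fin k, |M i j| := by
  conv_lhs => rw [Matrix.matrix_eq_sum_single M]
  refine (norm_sum_le _ _).trans (Finset.sum_le_sum fun i _ => ?_)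
  exact (norm_sum_le _ _).trans (Finset.sum_le_sum fun j _ => std_norm_le i j _)

lemma sum_ite_lt {k : ℕ} (j : Fin k) (g : ℕ → ℝ) :
    ∑ l : Fin k, (if (l:ℕ) < (j:ℕ) then g (l:ℕ) else 0)
      = ∑ n ∈ Finset.range (j:ℕ), g n := by
  rw [Fin.sum_univ_eq_sum_range (fun n => if n < (j:ℕ) then g n else 0) k]
  rw [← Finset.sum_subset (Finset.range_subset_range.2 j.isLt.le)
    (fun x _ hx' => by rw [if_neg (by simpa using hx')])]
  exact Finset.sum_congr rfl fun n hn => if_pos (Finset.mem_range.1 hn)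

lemma geom6 (m : ℕ) : ∑ n ∈ Finset.range m, (6:ℝ)^(n+1) ≤ 6^(m+1)/5 := by
  induction m with
  | zero => simp; positivity
  | succ m ih =>
    rw [Finset.sum_range_succ]
    have h1 : (6:ℝ)^(m+1+1) = 6 * 6^(m+1) := by ring
    rw [h1]; linarith

lemma geom36 (m : ℕ) : ∑ n ∈ Finset.range m, (36:ℝ)^(n+1) ≤ 36^(m+1)/35 := by
  induction m with
  | zero => simp; positivity
  | succ m ih =>
    rw [Finset.sum_range_succ]
    have h1 : (36:ℝ)^(m+1+1) = 36 * 36^(m+1) := by ring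
    rw [h1]; linarith

/-- Main entrywise induction: if `T` is lower triangular with positive diagonal and all entries
of `T * Tᵀ - 1` are at most `δ` with `δ` small, then entries of `T - 1` are `O(δ)`. -/
lemma key {k : ℕ} (T : Matrix (Fin k) (Fin k) ℝ)
    (hlow : ∀ i j : Fin k, i < j → T i j = 0) (hdiag : ∀ i, 0 < T i i)
    (δ : ℝ) (hδ0 : 0 ≤ δ) (hδ : δ ≤ (1/36)^(k+1))
    (hE : ∀ i j : Fin k, |(T * Tᵀ - 1) i j| ≤ δ) :
    ∀ j i : Fin k, |T i j - (1 : Matrix (Fin k) (Fin k) ℝ) i j| ≤ 6^((j:ℕ)+1) * δ := by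
  -- global small bounds
  have hδ36 : δ ≤ 1/36 := hδ.trans (by
    calc ((1:ℝ)/36)^(k+1) ≤ (1/36)^1 := by
          apply pow_le_pow_of_le_one (by norm_num) (by norm_num) (by omega)
    _ = 1/36 := pow_one _)
  have h6k : ∀ l : ℕ, l < k → (6:ℝ)^(l+1) * δ ≤ 1/36 := by
    intro l hl
    have h1 : (6:ℝ)^(l+1) ≤ 36^k := by
      calc (6:ℝ)^(l+1) ≤ 36^(l+1) := by
            apply pow_le_pow_left₀ (by norm_num) (by norm_num)
      _ ≤ 36^k := by apply pow_le_pow_right₀ (by norm_num) (by omega)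
    have h2 : (36:ℝ)^k * (1/36)^(k+1) = 1/36 := by
      rw [pow_succ, ← mul_assoc, ← mul_pow]; norm_num
    calc (6:ℝ)^(l+1) * δ ≤ 36^k * (1/36)^(k+1) :=
          mul_le_mul h1 hδ hδ0 (by positivity)
    _ = 1/36 := h2
  have h36jk : ∀ j : Fin k, δ * (36:ℝ)^((j:ℕ)+1) ≤ 1 := by
    intro j
    have hsplit : ((1:ℝ)/36)^(k+1) = (1/36)^((j:ℕ)+1) * (1/36)^(k - (j:ℕ)) := by
      rw [← pow_add]; congr 1; omega
    have h2 : (36:ℝ)^((j:ℕ)+1) * (1/36)^((j:ℕ)+1) = 1 := by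
      rw [← mul_pow]; norm_num
    calc δ * (36:ℝ)^((j:ℕ)+1) ≤ (1/36)^(k+1) * 36^((j:ℕ)+1) :=
          mul_le_mul_of_nonneg_right hδ (by positivity)
    _ = (36^((j:ℕ)+1) * (1/36)^((j:ℕ)+1)) * (1/36)^(k - (j:ℕ)) := by
          rw [hsplit]; ring
    _ = (1/36)^(k - (j:ℕ)) := by rw [h2, one_mul]
    _ ≤ 1 := pow_le_one₀ (by norm_num) (by norm_num)
  -- entry identity
  have hTT : ∀ i j : Fin k, (T * Tᵀ) i j = ∑ l, T i l * T j l := by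
    intro i j
    rw [Matrix.mul_apply]
    exact Finset.sum_congr rfl fun l _ => by rw [Matrix.transpose_apply]
  -- strong induction on column index
  suffices H : ∀ n : ℕ, ∀ j : Fin k, (j:ℕ) = n →
      ∀ i : Fin k, |T i j - (1 : Matrix (Fin k) (Fin k) ℝ) i j| ≤ 6^((j:ℕ)+1) * δ by
    intro j i; exact H (j:ℕ) j rfl i
  intro n
  induction n using Nat.strong_induction_on with
  | _ n IH =>
  intro j hj i
  -- facts from the inductive hypothesis
  have IH' : ∀ l : Fin k, l < j → ∀ i : Fin k,
      |T i l - (1 : Matrix (Fin k) (Fin k) ℝ) i l| ≤ 6^((l:ℕ)+1) * δ := by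
    intro l hl i
    have hln : (l:ℕ) < n := hj ▸ hl
    exact IH (l:ℕ) hln l rfl i
  have hsmall : ∀ l : Fin k, l < j → ∀ i : Fin k, i ≠ l → |T i l| ≤ 6^((l:ℕ)+1) * δ := by
    intro l hl i hi
    have h1 := IH' l hl i
    rwa [Matrix.one_apply_ne hi, sub_zero] at h1
  have hbig : ∀ l : Fin k, l < j → ∀ i : Fin k, |T i l| ≤ 3/2 := by
    intro l hl i
    have h1 := IH' l hl i
    have h2 : (6:ℝ)^((l:ℕ)+1) * δ ≤ 1/36 := h6k _ l.isLt
    have h3 : |(1 : Matrix (Fin k) (Fin k) ℝ) i l| ≤ 1 := by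
      rcases eq_or_ne i l with h|h
      · rw [h, Matrix.one_apply_eq]; norm_num
      · rw [Matrix.one_apply_ne h]; norm_num
    calc |T i l| = |(T i l - (1 : Matrix (Fin k) (Fin k) ℝ) i l)
          + (1 : Matrix (Fin k) (Fin k) ℝ) i l| := by ring_nf
    _ ≤ |T i l - (1 : Matrix (Fin k) (Fin k) ℝ) i l|
          + |(1 : Matrix (Fin k) (Fin k) ℝ) i l| := abs_add_le _ _
    _ ≤ 1/36 + 1 := add_le_add (h1.trans h2) h3
    _ ≤ 3/2 := by norm_num
  have hsplit : ∀ i : Fin k, (T * Tᵀ) i j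
      = T i j * T j j + ∑ l ∈ Finset.univ.erase j, T i l * T j l := by
    intro i
    rw [hTT i j, ← Finset.add_sum_erase _ _ (Finset.mem_univ j)]
  -- bound the remainder sum in the diagonal entry
  have hRdiag : |∑ l ∈ Finset.univ.erase j, T j l * T j l| ≤ δ/2 := by
    have hb : ∀ l ∈ Finset.univ.erase j, |T j l * T j l|
        ≤ (if (l:ℕ) < (j:ℕ) then (36:ℝ)^((l:ℕ)+1) * δ^2 else 0) := by
      intro l hl
      have hne : l ≠ j := Finset.ne_of_mem_erase hl
      rcases lt_or_gt_of_ne hne with h|h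
      · rw [if_pos (Fin.lt_def.mp h)]
        have hs := hsmall l h j (hne.symm)
        rw [abs_mul]
        calc |T j l| * |T j l| ≤ (6^((l:ℕ)+1)*δ) * (6^((l:ℕ)+1)*δ) :=
              mul_le_mul hs hs (abs_nonneg _) (by positivity)
        _ = (6^((l:ℕ)+1) * 6^((l:ℕ)+1)) * δ^2 := by ring
        _ = (36:ℝ)^((l:ℕ)+1) * δ^2 := by rw [← mul_pow]; norm_num
      · rw [if_neg (by exact not_lt.2 (Fin.lt_def.mp h).le), hlow j l h]
        simp
    calc |∑ l ∈ Finset.univ.erase j, T j l * T j l|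
        ≤ ∑ l ∈ Finset.univ.erase j, |T j l * T j l| := Finset.abs_sum_le_sum_abs _ _
    _ ≤ ∑ l ∈ Finset.univ.erase j,
          (if (l:ℕ) < (j:ℕ) then (36:ℝ)^((l:ℕ)+1) * δ^2 else 0) := Finset.sum_le_sum hb
    _ ≤ ∑ l : Fin k, (if (l:ℕ) < (j:ℕ) then (36:ℝ)^((l:ℕ)+1) * δ^2 else 0) :=
          Finset.sum_le_sum_of_subset_of_nonneg (Finset.erase_subset _ _)
            (fun l _ _ => by positivity)
    _ = ∑ m ∈ Finset.range (j:ℕ), (36:ℝ)^(m+1) * δ^2 :=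
          sum_ite_lt j (fun m => (36:ℝ)^(m+1) * δ^2)
    _ = (∑ m ∈ Finset.range (j:ℕ), (36:ℝ)^(m+1)) * δ^2 := by rw [Finset.sum_mul]
    _ ≤ (36^((j:ℕ)+1)/35) * δ^2 := mul_le_mul_of_nonneg_right (geom36 _) (sq_nonneg _)
    _ ≤ δ/2 := by nlinarith [h36jk j, hδ0, mul_le_mul_of_nonneg_left (h36jk j) hδ0]
  have hjj2 : |T j j * T j j - 1| ≤ 3/2 * δ := by
    have h1 := hE j j
    rw [Matrix.sub_apply, Matrix.one_apply_eq] at h1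
    have h2 : T j j * T j j - 1 = ((T * Tᵀ) j j - 1)
        - ∑ l ∈ Finset.univ.erase j, T j l * T j l := by
      rw [hsplit j]; ring
    rw [h2]
    calc |((T * Tᵀ) j j - 1) - ∑ l ∈ Finset.univ.erase j, T j l * T j l|
        ≤ |(T * Tᵀ) j j - 1| + |∑ l ∈ Finset.univ.erase j, T j l * T j l| := abs_sub _ _
    _ ≤ δ + δ/2 := add_le_add h1 hRdiag
    _ = 3/2 * δ := by ring
  have habs := abs_le.mp hjj2
  have hTjj_low : (7:ℝ)/10 ≤ T j j := by
    have h0 := hdiag j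
    nlinarith [habs.1, hδ36, mul_pos h0 h0]
  have hTjj_close : |T j j - 1| ≤ 2 * δ := by
    rw [abs_le]
    constructor <;> nlinarith [habs.1, habs.2, hδ0]
  rcases lt_trichotomy i j with hij|hij|hij
  · rw [hlow i j hij, Matrix.one_apply_ne (Fin.ne_of_lt hij), sub_zero, abs_zero]
    positivity
  · subst hij
    rw [Matrix.one_apply_eq]
    have h2 : (2:ℝ) ≤ 6^((i:ℕ)+1) := by
      calc (2:ℝ) ≤ 6^1 := by norm_num
      _ ≤ 6^((i:ℕ)+1) := pow_le_pow_right₀ (by norm_num) (by omega)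
    calc |T i i - 1| ≤ 2*δ := hTjj_close
    _ ≤ 6^((i:ℕ)+1)*δ := mul_le_mul_of_nonneg_right h2 hδ0
  · have hne : i ≠ j := (Fin.ne_of_lt hij).symm
    rw [Matrix.one_apply_ne hne, sub_zero]
    have hR : |∑ l ∈ Finset.univ.erase j, T i l * T j l| ≤ 3/10 * (6^((j:ℕ)+1) * δ) := by
      have hb : ∀ l ∈ Finset.univ.erase j, |T i l * T j l|
          ≤ (if (l:ℕ) < (j:ℕ) then 3/2 * ((6:ℝ)^((l:ℕ)+1) * δ) else 0) := by
        intro l hl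
        have hne' : l ≠ j := Finset.ne_of_mem_erase hl
        rcases lt_or_gt_of_ne hne' with h|h
        · rw [if_pos (Fin.lt_def.mp h), abs_mul]
          exact mul_le_mul (hbig l h i) (hsmall l h j hne'.symm) (abs_nonneg _) (by norm_num)
        · rw [if_neg (by exact not_lt.2 (Fin.lt_def.mp h).le), hlow j l h]
          simp
      calc |∑ l ∈ Finset.univ.erase j, T i l * T j l|
          ≤ ∑ l ∈ Finset.univ.erase j, |T i l * T j l| := Finset.abs_sum_le_sum_abs _ _
      _ ≤ ∑ l ∈ Finset.univ.erase j,
            (if (l:ℕ) < (j:ℕ) then 3/2 * ((6:ℝ)^((l:ℕ)+1) * δ) else 0) :=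
            Finset.sum_le_sum hb
      _ ≤ ∑ l : Fin k, (if (l:ℕ) < (j:ℕ) then 3/2 * ((6:ℝ)^((l:ℕ)+1) * δ) else 0) :=
            Finset.sum_le_sum_of_subset_of_nonneg (Finset.erase_subset _ _)
              (fun l _ _ => by positivity)
      _ = ∑ m ∈ Finset.range (j:ℕ), 3/2 * ((6:ℝ)^(m+1) * δ) :=
            sum_ite_lt j (fun m => 3/2 * ((6:ℝ)^(m+1) * δ))
      _ = 3/2*δ * ∑ m ∈ Finset.range (j:ℕ), (6:ℝ)^(m+1) := by
            rw [Finset.mul_sum]; exact Finset.sum_congr rfl fun m _ => by ring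
      _ ≤ 3/2*δ * (6^((j:ℕ)+1)/5) := mul_le_mul_of_nonneg_left (geom6 _) (by positivity)
      _ = 3/10 * (6^((j:ℕ)+1) * δ) := by ring
    have h1 := hE i j
    rw [Matrix.sub_apply, Matrix.one_apply_ne hne, sub_zero] at h1
    have h2 : T i j * T j j = (T * Tᵀ) i j
        - ∑ l ∈ Finset.univ.erase j, T i l * T j l := by
      rw [hsplit i]; ring
    have h3 : |T i j * T j j| ≤ δ + 3/10 * (6^((j:ℕ)+1) * δ) := by
      rw [h2]
      calc |(T * Tᵀ) i j - ∑ l ∈ Finset.univ.erase j, T i l * T j l|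
          ≤ |(T * Tᵀ) i j| + |∑ l ∈ Finset.univ.erase j, T i l * T j l| := abs_sub _ _
      _ ≤ δ + 3/10 * (6^((j:ℕ)+1) * δ) := add_le_add h1 hR
    have h4 : |T i j| * (7/10) ≤ |T i j * T j j| := by
      rw [abs_mul, abs_of_pos (hdiag j)]
      exact mul_le_mul_of_nonneg_left hTjj_low (abs_nonneg _)
    have hc : 6 * δ ≤ 6^((j:ℕ)+1)*δ := by
      have : (6:ℝ) ≤ 6^((j:ℕ)+1) := by
        calc (6:ℝ) = 6^1 := by norm_num
        _ ≤ 6^((j:ℕ)+1) := pow_le_pow_right₀ (by norm_num) (by omega)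
      exact mul_le_mul_of_nonneg_right this hδ0
    have hcpos : (0:ℝ) ≤ 6^((j:ℕ)+1)*δ := by positivity
    linarith [h3, h4, hc, hcpos]

lemma main (k : ℕ) :
    ∃ C > (0 : ℝ), ∀ ε : ℝ, ε ∈ Set.Ioo (0 : ℝ) (1/2) →
      ∀ A : Matrix (Fin k) (Fin k) ℝ, A.IsSymm → opNorm (A - 1) < ε →
        ∀ T : Matrix (Fin k) (Fin k) ℝ,
          (∀ i j : Fin k, i < j → T i j = 0) → (∀ i : Fin k, 0 < T i i) →
          T * A * Tᵀ = 1 →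
          opNorm (T - 1) < C * ε := by
  refine ⟨2*(k:ℝ)^2*6^k + 6*36^(k+1) + 1, by positivity, ?_⟩
  rintro ε ⟨hε0, hε2⟩ A hA hAε T hlow hdiag hfact
  rw [opNorm_eq] at hAε ⊢
  have hfact' : T * Tᵀ - 1 = T * (1 - A) * Tᵀ := by
    rw [Matrix.mul_sub, Matrix.mul_one, Matrix.sub_mul, hfact]
  have hnorm_sub : ‖T * Tᵀ - 1‖ ≤ ‖T‖*‖T‖*ε := by
    rw [hfact']
    calc ‖T * (1 - A) * Tᵀ‖ ≤ ‖T * (1 - A)‖ * ‖Tᵀ‖ := Matrix.l2_opNorm_mul _ _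
    _ ≤ (‖T‖ * ‖1 - A‖) * ‖Tᵀ‖ :=
        mul_le_mul_of_nonneg_right (Matrix.l2_opNorm_mul _ _) (norm_nonneg _)
    _ = ‖T‖ * ‖T‖ * ‖1 - A‖ := by rw [transpose_norm]; ring
    _ ≤ ‖T‖ * ‖T‖ * ε := by
        have h1 : ‖(1:Matrix (Fin k) (Fin k) ℝ) - A‖ = ‖A - 1‖ := norm_sub_rev _ _
        exact mul_le_mul_of_nonneg_left (h1.le.trans hAε.le) (by positivity)
  have hTT' : ‖T * Tᵀ‖ = ‖T‖ * ‖T‖ := mul_transpose_norm T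
  have hT2 : ‖T‖ * ‖T‖ ≤ 2 := by
    have h1 : ‖T * Tᵀ‖ ≤ ‖T * Tᵀ - 1‖ + ‖(1:Matrix (Fin k) (Fin k) ℝ)‖ := by
      calc ‖T * Tᵀ‖ = ‖(T * Tᵀ - 1) + 1‖ := by rw [sub_add_cancel]
      _ ≤ _ := norm_add_le _ _
    have h2 := norm_one_le' (k := k)
    rw [hTT'] at h1
    nlinarith [norm_nonneg T, hnorm_sub, hε2]
  have hδle : ‖T * Tᵀ - 1‖ ≤ 2*ε := by
    nlinarith [hnorm_sub, hε0]
  by_cases hcase : 2*ε ≤ (1/36)^(k+1)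
  · have hEnt : ∀ i j : Fin k, |(T * Tᵀ - 1) i j| ≤ 2*ε :=
      fun i j => (entry_le _ i j).trans hδle
    have hkey := key T hlow hdiag (2*ε) (by positivity) hcase hEnt
    have hsum : ‖T - 1‖ ≤ (k:ℝ) * ((k:ℝ) * (6^k*(2*ε))) := by
      calc ‖T - 1‖ ≤ ∑ i : Fin k, ∑ j : Fin k, |(T - 1) i j| := norm_le_sum_abs _
      _ ≤ ∑ _i : Fin k, ∑ _j : Fin k, 6^k*(2*ε) := by
          refine Finset.sum_le_sum fun i _ => Finset.sum_le_sum fun j _ => ?_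
          rw [Matrix.sub_apply]
          refine (hkey j i).trans ?_
          have h6 : (6:ℝ)^((j:ℕ)+1) ≤ 6^k := pow_le_pow_right₀ (by norm_num) (by omega)
          exact mul_le_mul_of_nonneg_right h6 (by positivity)
      _ = (k:ℝ) * ((k:ℝ) * (6^k*(2*ε))) := by
          simp [Finset.sum_const, Finset.card_univ, nsmul_eq_mul]
    have heq : (k:ℝ) * ((k:ℝ) * (6^k*(2*ε))) = 2*(k:ℝ)^2*6^k*ε := by ring
    have hpos : (0:ℝ) < (6*36^(k+1) + 1)*ε := by positivity
    nlinarith [hsum, hpos]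
  · have hTle : ‖T‖ ≤ 2 := by nlinarith [norm_nonneg T, hT2]
    have h3 : ‖T - 1‖ ≤ 3 := by
      calc ‖T - 1‖ ≤ ‖T‖ + ‖(1:Matrix (Fin k) (Fin k) ℝ)‖ := norm_sub_le _ _
      _ ≤ 2 + 1 := add_le_add hTle norm_one_le'
      _ = 3 := by norm_num
    have hε' : (1/36:ℝ)^(k+1) < 2*ε := not_le.mp hcase
    have h36 : (36:ℝ)^(k+1) * (1/36)^(k+1) = 1 := by rw [← mul_pow]; norm_num
    have h1 : (1:ℝ) < 36^(k+1)*(2*ε) :=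
      h36 ▸ mul_lt_mul_of_pos_left hε' (pow_pos (by norm_num) _)
    have h2 : (0:ℝ) ≤ 2*(k:ℝ)^2*6^k*ε := by positivity
    nlinarith [h3, h1, h2, hε0]

end CholeskyAux

/-- There is a constant C_k depending only on k such that for any ε ∈ (0,1/2) and any
symmetric k×k matrix A with ‖A − Id_k‖ < ε (operator norm), the lower triangular matrix T
with positive diagonal such that T A Tᵀ = Id_k satisfies ‖T − Id_k‖ < C_k ε. -/
theorem stmt1 (k : ℕ) :
    ∃ C > (0 : ℝ), ∀ ε : ℝ, ε ∈ Set.Ioo (0 : ℝ) (1/2) →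
      ∀ A : Matrix (Fin k) (Fin k) ℝ, A.IsSymm → opNorm (A - 1) < ε →
        ∀ T : Matrix (Fin k) (Fin k) ℝ,
          (∀ i j : Fin k, i < j → T i j = 0) → (∀ i : Fin k, 0 < T i i) →
          T * A * Tᵀ = 1 →
          opNorm (T - 1) < C * ε := by
  exact CholeskyAux.main k
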